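/- Apéry's constant ζ(3) := Σ_{n=1}^{∞} 1/n³ satisfies the two convergent series identities (3/4)·ζ(3) = Σ_{j=1}^{∞} (H_j³ + 3·H_j·H_j^{(2)} + 2·H_j^{(3)}) / (12 · 2^j) and (3/4)·ζ(3) = (1/6)·(log 2)³ + Σ_{j=1}^{∞} H_j · H_j^{(2)} / 2^{j+1}. -/

import Mathlib

/-- The `r`-order harmonic number `H r n = Σ_{m=1}^{n} 1/m^r`. -/
noncomputable def H (r n : ℕ) : ℝ :=
  ∑ m ∈ Finset.Icc 1 n, 1 / (m : ℝ) ^ r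

open Finset

lemma H_zero (r : ℕ) : H r 0 = 0 := by simp [H]

lemma H_succ (r n : ℕ) : H r (n + 1) = H r n + 1 / ((n : ℝ) + 1) ^ r := by
  rw [H, H, Finset.sum_Icc_succ_top (by omega)]
  push_cast; ring

lemma H_nonneg (r n : ℕ) : 0 ≤ H r n :=
  Finset.sum_nonneg fun m _ => by positivity

lemma H_range (r M : ℕ) : H r M = ∑ k ∈ Finset.range M, 1 / ((k : ℝ) + 1) ^ r := by
  induction M with
  | zero => simp [H]
  | succ n ih => rw [H_succ, ih, Finset.sum_range_succ]

noncomputable def E2 (n : ℕ) : ℝ := ((H 1 n) ^ 2 - H 2 n) / 2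
noncomputable def G2 (n : ℕ) : ℝ := ((H 1 n) ^ 2 + H 2 n) / 2
noncomputable def P3 (n : ℕ) : ℝ :=
  ((H 1 n) ^ 3 + 3 * H 1 n * H 2 n + 2 * H 3 n) / 6

lemma E2_succ (n : ℕ) : E2 (n + 1) = E2 n + H 1 n / ((n : ℝ) + 1) := by
  have h : ((n : ℝ) + 1) ≠ 0 := by positivity
  simp only [E2, H_succ]
  field_simp
  ring

lemma G2_succ (n : ℕ) : G2 (n + 1) = G2 n + H 1 (n + 1) / ((n : ℝ) + 1) := by
  have h : ((n : ℝ) + 1) ≠ 0 := by positivity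
  simp only [G2, H_succ]
  field_simp
  ring

lemma P3_succ (n : ℕ) : P3 (n + 1) = P3 n + G2 (n + 1) / ((n : ℝ) + 1) := by
  have h : ((n : ℝ) + 1) ≠ 0 := by positivity
  simp only [P3, G2, H_succ]
  field_simp
  ring

lemma E3_succ (n : ℕ) : P3 (n + 1) - H 1 (n + 1) * H 2 (n + 1)
    = (P3 n - H 1 n * H 2 n) + E2 n / ((n : ℝ) + 1) := by
  have h : ((n : ℝ) + 1) ≠ 0 := by positivity
  simp only [P3, E2, H_succ]
  field_simp
  ring

lemma E2_zero : E2 0 = 0 := by simp [E2, H_zero]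
lemma E2_one : E2 1 = 0 := by
  have := E2_succ 0
  simp [E2_zero, H_zero] at this
  simpa using this

lemma E2_nonneg (n : ℕ) : 0 ≤ E2 n := by
  induction n with
  | zero => simp [E2_zero]
  | succ n ih =>
    rw [E2_succ]
    have h1 : 0 ≤ H 1 n / ((n : ℝ) + 1) := by
      have := H_nonneg 1 n; positivity
    linarith

lemma G2_nonneg (n : ℕ) : 0 ≤ G2 n := by
  have h1 := H_nonneg 1 n
  have h2 := H_nonneg 2 n
  unfold G2; positivity

lemma fubini (F : ℕ × ℕ → ℝ) (hF : Summable F) {r c : ℕ → ℝ}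
    (hr : ∀ m, HasSum (fun n => F (m, n)) (r m))
    (hc : ∀ n, HasSum (fun m => F (m, n)) (c n))
    {s : ℝ} (hrs : HasSum r s) : HasSum c s := by
  have h1 : HasSum r (∑' p, F p) := hF.hasSum.prod_fiberwise hr
  have h2 : HasSum (F ∘ (Equiv.prodComm ℕ ℕ)) (∑' p, F p) :=
    ((Equiv.prodComm ℕ ℕ).hasSum_iff).mpr hF.hasSum
  have h3 : HasSum c (∑' p, F p) := by
    refine HasSum.prod_fiberwise h2 ?_
    intro n
    simpa using hc n
  rwa [h1.unique hrs] at h3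

lemma hasSum_half : HasSum (fun n : ℕ => (1 / 2 : ℝ) ^ n) 2 := by
  have := hasSum_geometric_of_lt_one (by norm_num : (0:ℝ) ≤ 1/2) (by norm_num : (1/2:ℝ) < 1)
  norm_num at this
  exact this

lemma hasSum_if_le (m : ℕ) (c : ℝ) :
    HasSum (fun n : ℕ => if m ≤ n then c / 2 ^ (n + 2) else 0) (c / 2 ^ (m + 1)) := by
  have hinj : Function.Injective (fun n : ℕ => n + m) := fun a b h => by simpa using h
  rw [← Function.Injective.hasSum_iff hinj ?_]
  · have h := hasSum_half.mul_left (c / 2 ^ (m + 2))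
    have he : (fun n : ℕ => (if m ≤ n then c / 2 ^ (n + 2) else 0)) ∘ (fun n : ℕ => n + m)
        = fun n : ℕ => c / 2 ^ (m + 2) * (1 / 2) ^ n := by
      funext n
      simp only [Function.comp_apply]
      rw [if_pos (by omega)]
      rw [div_pow, one_pow, div_mul_div_comm, mul_one]
      congr 1
      rw [← pow_add]
      congr 1
      omega
    rw [he]
    convert h using 1
    · rfl
    rw [div_mul_eq_mul_div, pow_succ]
    ring
  · intro x hx
    have hmx : ¬ m ≤ x := by
      by_contra hc2
      exact hx ⟨x - m, show x - m + m = x by omega⟩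
    simp [hmx]

lemma abel (g : ℕ → ℝ) (hg : ∀ n, 0 ≤ g n) {s : ℝ}
    (h : HasSum (fun m => g m / 2 ^ (m + 1)) s) :
    HasSum (fun n => (∑ m ∈ Finset.range (n + 1), g m) / 2 ^ (n + 2)) s := by
  set F : ℕ × ℕ → ℝ := fun p => if p.1 ≤ p.2 then g p.1 / 2 ^ (p.2 + 2) else 0 with hFdef
  have hr : ∀ m, HasSum (fun n => F (m, n)) (g m / 2 ^ (m + 1)) := fun m => hasSum_if_le m (g m)
  have hc : ∀ n, HasSum (fun m => F (m, n))
      ((∑ m ∈ Finset.range (n + 1), g m) / 2 ^ (n + 2)) := by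
    intro n
    have h0 : ∀ m ∉ Finset.range (n + 1), F (m, n) = 0 := by
      intro m hm
      simp only [Finset.mem_range] at hm
      simp only [hFdef]
      rw [if_neg (by omega)]
    have hsum := hasSum_sum_of_ne_finset_zero (L := SummationFilter.unconditional ℕ) h0
    convert hsum using 1
    rw [Finset.sum_div]
    refine Finset.sum_congr rfl fun m hm => ?_
    simp only [Finset.mem_range] at hm
    simp only [hFdef]
    rw [if_pos (by omega)]
  have hF : Summable F := by
    rw [summable_prod_of_nonneg]
    · constructor
      · exact fun m => (hr m).summable
      · refine h.summable.congr fun m => ?_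
        exact ((hr m).tsum_eq).symm
    · intro p
      simp only [Pi.zero_apply, hFdef]
      split
      · have := hg p.1; positivity
      · exact le_refl 0
  exact fubini F hF hr hc h

-- hockey stick
lemma hockey (k : ℕ) : ∀ n : ℕ, ∑ j ∈ Finset.range (n + 1), Nat.choose (j + k) k
    = Nat.choose (n + k + 1) (k + 1) := by
  intro n
  induction n with
  | zero => simp
  | succ n ih =>
    rw [Finset.sum_range_succ, ih]
    have e : n + 1 + k = n + k + 1 := by omega
    rw [e, Nat.choose_succ_succ' (n + k + 1) k]
    omega

lemma hchoose : ∀ k : ℕ, HasSum (fun n : ℕ => (Nat.choose (n + k) k : ℝ) / 2 ^ (n + k + 1)) 1 := by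
  intro k
  induction k with
  | zero =>
    have h := hasSum_half.mul_left (1/2 : ℝ)
    have he : (fun n : ℕ => (Nat.choose (n + 0) 0 : ℝ) / 2 ^ (n + 0 + 1))
        = fun n : ℕ => 1/2 * (1/2 : ℝ) ^ n := by
      funext n
      simp only [Nat.add_zero, Nat.choose_zero_right, Nat.cast_one, pow_succ]
      simp only [div_pow, one_pow]
      ring
    rw [he]
    convert h using 1
    · rfl
    norm_num
  | succ k ih =>
    have hf : Summable fun n : ℕ => ‖(Nat.choose (n + k) k : ℝ) / 2 ^ (n + k + 1)‖ := by
      refine ih.summable.congr fun n => ?_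
      rw [Real.norm_eq_abs, abs_of_nonneg (by positivity)]
    have hg : Summable fun n : ℕ => ‖(1/2 : ℝ) ^ n‖ := by
      refine hasSum_half.summable.congr fun n => ?_
      rw [Real.norm_eq_abs, abs_of_nonneg (by positivity)]
    have h := hasSum_sum_range_mul_of_summable_norm hf hg
    rw [ih.tsum_eq, hasSum_half.tsum_eq, one_mul] at h
    have he : (fun n : ℕ => ∑ j ∈ Finset.range (n + 1),
        (Nat.choose (j + k) k : ℝ) / 2 ^ (j + k + 1) * (1/2 : ℝ) ^ (n - j))
        = fun n : ℕ => 2 * ((Nat.choose (n + (k+1)) (k+1) : ℝ) / 2 ^ (n + (k+1) + 1)) := by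
      funext n
      have hterm : ∀ j ∈ Finset.range (n + 1),
          (Nat.choose (j + k) k : ℝ) / 2 ^ (j + k + 1) * (1/2 : ℝ) ^ (n - j)
          = (Nat.choose (j + k) k : ℝ) * (1/2) ^ (n + k + 1) := by
        intro j hj
        simp only [Finset.mem_range] at hj
        have hexp : n + k + 1 = (j + k + 1) + (n - j) := by omega
        rw [hexp, pow_add]
        simp only [div_pow, one_pow]
        ring
      rw [Finset.sum_congr rfl hterm, ← Finset.sum_mul]
      have hh : (∑ j ∈ Finset.range (n + 1), (Nat.choose (j + k) k : ℝ))
          = (Nat.choose (n + k + 1) (k + 1) : ℝ) := by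
        exact_mod_cast congrArg (Nat.cast : ℕ → ℝ) (hockey k n)
      rw [hh]
      have e : n + (k + 1) = n + k + 1 := by omega
      rw [e, pow_succ]
      simp only [div_pow, one_pow]
      ring
    rw [he] at h
    have h2 := h.mul_left (1/2 : ℝ)
    convert h2 using 2 with n
    · rfl
    · ring
    · norm_num

lemma altsum0 (m : ℕ) (hm : m ≠ 0) :
    ∑ i ∈ Finset.range (m + 1), (-1 : ℝ) ^ i * (Nat.choose m i : ℝ) = 0 := by
  have h := Int.alternating_sum_range_choose_of_ne hm
  have h2 := congrArg (fun z : ℤ => (z : ℝ)) h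
  push_cast at h2
  exact h2

lemma alt_next (m : ℕ) :
    ∑ i ∈ Finset.range (m + 1), (-1 : ℝ) ^ i * (Nat.choose (m + 1) (i + 1) : ℝ) = 1 := by
  have h0 := altsum0 (m + 1) (Nat.succ_ne_zero m)
  rw [Finset.sum_range_succ'] at h0
  simp only [pow_zero, Nat.choose_zero_right, Nat.cast_one, one_mul] at h0
  have h1 : ∑ i ∈ Finset.range (m + 1), (-1 : ℝ) ^ (i + 1) * (Nat.choose (m + 1) (i + 1) : ℝ)
      = - ∑ i ∈ Finset.range (m + 1), (-1 : ℝ) ^ i * (Nat.choose (m + 1) (i + 1) : ℝ) := by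
    rw [← Finset.sum_neg_distrib]
    exact Finset.sum_congr rfl fun i _ => by ring
  rw [h1] at h0
  linarith

-- B1 m = ∑_{i<m} (-1)^i C(m,i+1)/(i+1) = H 1 m
lemma B1_eq : ∀ m : ℕ,
    ∑ i ∈ Finset.range m, (-1 : ℝ) ^ i * (Nat.choose m (i + 1) : ℝ) / ((i : ℝ) + 1) = H 1 m := by
  intro m
  induction m with
  | zero => simp [H_zero]
  | succ m ih =>
    have hsplit : ∀ i ∈ Finset.range (m + 1),
        (-1 : ℝ) ^ i * (Nat.choose (m + 1) (i + 1) : ℝ) / ((i : ℝ) + 1)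
        = (-1 : ℝ) ^ i * (Nat.choose m i : ℝ) / ((i : ℝ) + 1)
          + (-1 : ℝ) ^ i * (Nat.choose m (i + 1) : ℝ) / ((i : ℝ) + 1) := by
      intro i _
      rw [Nat.choose_succ_succ' m i]
      push_cast
      ring
    rw [Finset.sum_congr rfl hsplit, Finset.sum_add_distrib]
    have hY : ∑ i ∈ Finset.range (m + 1), (-1 : ℝ) ^ i * (Nat.choose m (i + 1) : ℝ) / ((i : ℝ) + 1)
        = H 1 m := by
      rw [Finset.sum_range_succ, Nat.choose_succ_self]
      simpa using ih
    have hX : ∑ i ∈ Finset.range (m + 1), (-1 : ℝ) ^ i * (Nat.choose m i : ℝ) / ((i : ℝ) + 1)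
        = 1 / ((m : ℝ) + 1) := by
      have hterm : ∀ i ∈ Finset.range (m + 1),
          (-1 : ℝ) ^ i * (Nat.choose m i : ℝ) / ((i : ℝ) + 1)
          = ((-1 : ℝ) ^ i * (Nat.choose (m + 1) (i + 1) : ℝ)) * (1 / ((m : ℝ) + 1)) := by
        intro i _
        have hc := Nat.add_one_mul_choose_eq m i
        have hc2 : ((m : ℝ) + 1) * (Nat.choose m i : ℝ)
            = (Nat.choose (m + 1) (i + 1) : ℝ) * ((i : ℝ) + 1) := by exact_mod_cast hc
        have hi : ((i : ℝ) + 1) ≠ 0 := by positivity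
        have hm : ((m : ℝ) + 1) ≠ 0 := by positivity
        field_simp
        linear_combination hc2
      rw [Finset.sum_congr rfl hterm, ← Finset.sum_mul, alt_next m, one_mul]
    rw [hX, hY, H_succ]
    rw [pow_one]
    ring

lemma D_eq : ∀ m : ℕ,
    ∑ i ∈ Finset.range m, (-1 : ℝ) ^ i * (Nat.choose m (i + 1) : ℝ) / ((i : ℝ) + 1) ^ 2
    = G2 m := by
  intro m
  induction m with
  | zero => simp [G2, H_zero]
  | succ m ih =>
    have hsplit : ∀ i ∈ Finset.range (m + 1),
        (-1 : ℝ) ^ i * (Nat.choose (m + 1) (i + 1) : ℝ) / ((i : ℝ) + 1) ^ 2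
        = (-1 : ℝ) ^ i * (Nat.choose m i : ℝ) / ((i : ℝ) + 1) ^ 2
          + (-1 : ℝ) ^ i * (Nat.choose m (i + 1) : ℝ) / ((i : ℝ) + 1) ^ 2 := by
      intro i _
      rw [Nat.choose_succ_succ' m i]
      push_cast
      ring
    rw [Finset.sum_congr rfl hsplit, Finset.sum_add_distrib]
    have hY : ∑ i ∈ Finset.range (m + 1),
        (-1 : ℝ) ^ i * (Nat.choose m (i + 1) : ℝ) / ((i : ℝ) + 1) ^ 2 = G2 m := by
      rw [Finset.sum_range_succ, Nat.choose_succ_self]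
      simpa using ih
    have hX : ∑ i ∈ Finset.range (m + 1),
        (-1 : ℝ) ^ i * (Nat.choose m i : ℝ) / ((i : ℝ) + 1) ^ 2
        = H 1 (m + 1) / ((m : ℝ) + 1) := by
      have hterm : ∀ i ∈ Finset.range (m + 1),
          (-1 : ℝ) ^ i * (Nat.choose m i : ℝ) / ((i : ℝ) + 1) ^ 2
          = ((-1 : ℝ) ^ i * (Nat.choose (m + 1) (i + 1) : ℝ) / ((i : ℝ) + 1))
            * (1 / ((m : ℝ) + 1)) := by
        intro i _
        have hc := Nat.add_one_mul_choose_eq m i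
        have hc2 : ((m : ℝ) + 1) * (Nat.choose m i : ℝ)
            = (Nat.choose (m + 1) (i + 1) : ℝ) * ((i : ℝ) + 1) := by exact_mod_cast hc
        have hi : ((i : ℝ) + 1) ≠ 0 := by positivity
        have hm : ((m : ℝ) + 1) ≠ 0 := by positivity
        field_simp
        linear_combination hc2
      rw [Finset.sum_congr rfl hterm, ← Finset.sum_mul, B1_eq (m + 1)]
      ring
    rw [hX, hY, G2_succ]
    ring

lemma alt_cube (n : ℕ) :
    ∑ k ∈ Finset.range (n + 1), (-1 : ℝ) ^ k * (Nat.choose n k : ℝ) / ((k : ℝ) + 1) ^ 3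
    = G2 (n + 1) / ((n : ℝ) + 1) := by
  have hterm : ∀ k ∈ Finset.range (n + 1),
      (-1 : ℝ) ^ k * (Nat.choose n k : ℝ) / ((k : ℝ) + 1) ^ 3
      = ((-1 : ℝ) ^ k * (Nat.choose (n + 1) (k + 1) : ℝ) / ((k : ℝ) + 1) ^ 2)
        * (1 / ((n : ℝ) + 1)) := by
    intro k _
    have hc := Nat.add_one_mul_choose_eq n k
    have hc2 : ((n : ℝ) + 1) * (Nat.choose n k : ℝ)
        = (Nat.choose (n + 1) (k + 1) : ℝ) * ((k : ℝ) + 1) := by exact_mod_cast hc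
    have hk : ((k : ℝ) + 1) ≠ 0 := by positivity
    have hn : ((n : ℝ) + 1) ≠ 0 := by positivity
    field_simp
    linear_combination hc2
  rw [Finset.sum_congr rfl hterm, ← Finset.sum_mul, D_eq (n + 1)]
  ring

lemma eta3 {z3 : ℝ} (hz3 : HasSum (fun n : ℕ => 1 / ((n : ℝ) + 1) ^ 3) z3) :
    HasSum (fun k : ℕ => (-1 : ℝ) ^ k / ((k : ℝ) + 1) ^ 3) (3 / 4 * z3) := by
  have hodd : HasSum (fun k : ℕ => if Odd k then (2 : ℝ) / ((k : ℝ) + 1) ^ 3 else 0)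
      (1 / 4 * z3) := by
    have hinj : Function.Injective (fun n : ℕ => 2 * n + 1) := fun a b h => by simpa using h
    rw [← Function.Injective.hasSum_iff hinj ?_]
    · have h := hz3.mul_left (1 / 4)
      have he : ((fun k : ℕ => if Odd k then (2 : ℝ) / ((k : ℝ) + 1) ^ 3 else 0)
          ∘ (fun n : ℕ => 2 * n + 1))
          = fun n : ℕ => 1 / 4 * (1 / ((n : ℝ) + 1) ^ 3) := by
        funext n
        simp only [Function.comp_apply]
        rw [if_pos ⟨n, by omega⟩]
        push_cast
        have hn : ((n : ℝ) + 1) ≠ 0 := by positivity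
        field_simp
        ring
      rw [he]
      exact h
    · intro x hx
      rw [if_neg]
      rintro ⟨c, hc⟩
      exact hx ⟨c, show 2 * c + 1 = x by omega⟩
  have hsub := hz3.sub hodd
  have he2 : (fun k : ℕ => 1 / ((k : ℝ) + 1) ^ 3
      - (if Odd k then (2 : ℝ) / ((k : ℝ) + 1) ^ 3 else 0))
      = fun k : ℕ => (-1 : ℝ) ^ k / ((k : ℝ) + 1) ^ 3 := by
    funext k
    rcases Nat.even_or_odd k with hk | hk
    · rw [if_neg (by simpa using hk), hk.neg_one_pow, sub_zero]
    · rw [if_pos hk, hk.neg_one_pow]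
      ring
  rw [he2] at hsub
  convert hsub using 1
  · rfl
  ring

lemma row_choose (k : ℕ) (c : ℝ) :
    HasSum (fun n : ℕ => if k ≤ n then c * (Nat.choose n k : ℝ) / 2 ^ (n + 1) else 0) c := by
  have hinj : Function.Injective (fun n : ℕ => n + k) := fun a b h => by simpa using h
  rw [← Function.Injective.hasSum_iff hinj ?_]
  · have h := (hchoose k).mul_left c
    have he : ((fun n : ℕ => if k ≤ n then c * (Nat.choose n k : ℝ) / 2 ^ (n + 1) else 0)
        ∘ (fun n : ℕ => n + k))
        = fun n : ℕ => c * ((Nat.choose (n + k) k : ℝ) / 2 ^ (n + k + 1)) := by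
      funext n
      simp only [Function.comp_apply]
      rw [if_pos (by omega)]
      ring
    rw [he]
    simpa using h
  · intro x hx
    rw [if_neg]
    intro hkx
    exact hx ⟨x - k, show x - k + k = x by omega⟩

lemma eulerI {z3 : ℝ} (hz3 : HasSum (fun n : ℕ => 1 / ((n : ℝ) + 1) ^ 3) z3) :
    HasSum (fun n : ℕ => G2 (n + 1) / (((n : ℝ) + 1) * 2 ^ (n + 1))) (3 / 4 * z3) := by
  set F : ℕ × ℕ → ℝ := fun p => if p.1 ≤ p.2 then
      (-1 : ℝ) ^ p.1 * (Nat.choose p.2 p.1 : ℝ) / (((p.1 : ℝ) + 1) ^ 3 * 2 ^ (p.2 + 1)) else 0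
      with hFdef
  have hFabs : ∀ p : ℕ × ℕ, |F p| = if p.1 ≤ p.2 then
      (1 / ((p.1 : ℝ) + 1) ^ 3) * (Nat.choose p.2 p.1 : ℝ) / 2 ^ (p.2 + 1) else 0 := by
    intro p
    simp only [hFdef]
    split
    · rw [abs_div, abs_mul, abs_pow, abs_neg, abs_one, one_pow, one_mul,
        Nat.abs_cast, abs_of_pos (by positivity)]
      have h1 : ((p.1 : ℝ) + 1) ^ 3 ≠ 0 := by positivity
      have h2 : (2 : ℝ) ^ (p.2 + 1) ≠ 0 := by positivity
      field_simp
    · exact abs_zero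
  have hr : ∀ k, HasSum (fun n => F (k, n)) ((-1 : ℝ) ^ k / ((k : ℝ) + 1) ^ 3) := by
    intro k
    have he : (fun n => F (k, n)) = (fun n : ℕ => if k ≤ n then
        ((-1 : ℝ) ^ k / ((k : ℝ) + 1) ^ 3) * (Nat.choose n k : ℝ) / 2 ^ (n + 1) else 0) := by
      funext n
      simp only [hFdef]
      split
      · have h1 : ((k : ℝ) + 1) ^ 3 ≠ 0 := by positivity
        have h2 : (2 : ℝ) ^ (n + 1) ≠ 0 := by positivity
        field_simp
      · rfl
    rw [he]
    exact row_choose k _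
  have hrabs : ∀ k, HasSum (fun n => |F (k, n)|) (1 / ((k : ℝ) + 1) ^ 3) := by
    intro k
    have he : (fun n => |F (k, n)|) = (fun n : ℕ => if k ≤ n then
        (1 / ((k : ℝ) + 1) ^ 3) * (Nat.choose n k : ℝ) / 2 ^ (n + 1) else 0) := by
      funext n
      exact hFabs (k, n)
    rw [he]
    exact row_choose k _
  have hc : ∀ n, HasSum (fun k => F (k, n)) (G2 (n + 1) / (((n : ℝ) + 1) * 2 ^ (n + 1))) := by
    intro n
    have h0 : ∀ k ∉ Finset.range (n + 1), F (k, n) = 0 := by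
      intro k hk
      simp only [Finset.mem_range] at hk
      simp only [hFdef]
      rw [if_neg (by omega)]
    have hsum := hasSum_sum_of_ne_finset_zero (L := SummationFilter.unconditional ℕ) h0
    convert hsum using 1
    have hterm : ∀ k ∈ Finset.range (n + 1), F (k, n)
        = ((-1 : ℝ) ^ k * (Nat.choose n k : ℝ) / ((k : ℝ) + 1) ^ 3) * (1 / 2 ^ (n + 1)) := by
      intro k hk
      simp only [Finset.mem_range] at hk
      simp only [hFdef]
      rw [if_pos (by omega)]
      have h1 : ((k : ℝ) + 1) ^ 3 ≠ 0 := by positivity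
      have h2 : (2 : ℝ) ^ (n + 1) ≠ 0 := by positivity
      field_simp
    rw [Finset.sum_congr rfl hterm, ← Finset.sum_mul, alt_cube n]
    have h1 : ((n : ℝ) + 1) ≠ 0 := by positivity
    have h2 : (2 : ℝ) ^ (n + 1) ≠ 0 := by positivity
    field_simp
  have hF : Summable F := by
    rw [← summable_abs_iff]
    rw [summable_prod_of_nonneg (fun p => abs_nonneg _)]
    constructor
    · exact fun k => (hrabs k).summable
    · refine hz3.summable.congr fun k => ?_
      exact ((hrabs k).tsum_eq).symm
  exact fubini F hF hr hc (eta3 hz3)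

lemma hlog : HasSum (fun n : ℕ => (1 / 2 : ℝ) ^ (n + 1) / ((n : ℝ) + 1)) (Real.log 2) := by
  have h := Real.hasSum_pow_div_log_of_abs_lt_one
      (x := (1 / 2 : ℝ)) (by rw [abs_of_pos (by norm_num)]; norm_num)
  norm_num at h
  have e : -Real.log (1 / 2) = Real.log 2 := by
    rw [one_div, Real.log_inv, neg_neg]
  rw [e] at h
  exact h

lemma f1 (n : ℕ) : ∑ k ∈ Finset.range (n + 1), 1 / (((k : ℝ) + 1) * ((n : ℝ) - (k : ℝ) + 1))
    = 2 * H 1 (n + 1) / ((n : ℝ) + 2) := by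
  have hsplit : ∀ k ∈ Finset.range (n + 1),
      1 / (((k : ℝ) + 1) * ((n : ℝ) - (k : ℝ) + 1))
      = (1 / ((n : ℝ) + 2)) * (1 / ((k : ℝ) + 1) + 1 / ((n : ℝ) - (k : ℝ) + 1)) := by
    intro k hk
    simp only [Finset.mem_range] at hk
    have h1 : ((k : ℝ) + 1) ≠ 0 := by positivity
    have h2 : (0 : ℝ) < (n : ℝ) - (k : ℝ) + 1 := by
      have : (k : ℝ) ≤ (n : ℝ) := by exact_mod_cast Nat.lt_succ_iff.mp hk
      linarith
    have h3 : ((n : ℝ) + 2) ≠ 0 := by positivity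
    field_simp
    ring
  rw [Finset.sum_congr rfl hsplit, ← Finset.mul_sum, Finset.sum_add_distrib]
  have hA : ∑ k ∈ Finset.range (n + 1), 1 / ((k : ℝ) + 1) = H 1 (n + 1) := by
    rw [H_range]
    exact Finset.sum_congr rfl fun k _ => by rw [pow_one]
  have hB : ∑ k ∈ Finset.range (n + 1), 1 / ((n : ℝ) - (k : ℝ) + 1) = H 1 (n + 1) := by
    have hcast : ∀ k ∈ Finset.range (n + 1),
        1 / ((n : ℝ) - (k : ℝ) + 1) = 1 / (((n - k : ℕ) : ℝ) + 1) := by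
      intro k hk
      simp only [Finset.mem_range] at hk
      rw [Nat.cast_sub (by omega)]
    rw [Finset.sum_congr rfl hcast]
    have hrefl := Finset.sum_range_reflect (fun k => 1 / (((k : ℕ) : ℝ) + 1)) (n + 1)
    simp only [Nat.add_sub_cancel] at hrefl
    rw [hrefl]
    exact hA
  rw [hA, hB]
  ring

lemma hlog_norm : Summable fun n : ℕ => ‖(1 / 2 : ℝ) ^ (n + 1) / ((n : ℝ) + 1)‖ := by
  refine hlog.summable.congr fun n => ?_
  rw [Real.norm_eq_abs, abs_of_nonneg (by positivity)]

lemma hL2 : HasSum (fun n : ℕ => (1 / 2 : ℝ) ^ (n + 2) * (2 * H 1 (n + 1) / ((n : ℝ) + 2)))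
    ((Real.log 2) ^ 2) := by
  have h := hasSum_sum_range_mul_of_summable_norm hlog_norm hlog_norm
  rw [hlog.tsum_eq] at h
  rw [← sq] at h
  have he : (fun n : ℕ => ∑ k ∈ Finset.range (n + 1),
      (1 / 2 : ℝ) ^ (k + 1) / ((k : ℝ) + 1) * ((1 / 2 : ℝ) ^ (n - k + 1) / (((n - k : ℕ) : ℝ) + 1)))
      = fun n : ℕ => (1 / 2 : ℝ) ^ (n + 2) * (2 * H 1 (n + 1) / ((n : ℝ) + 2)) := by
    funext n
    have hterm : ∀ k ∈ Finset.range (n + 1),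
        (1 / 2 : ℝ) ^ (k + 1) / ((k : ℝ) + 1) * ((1 / 2 : ℝ) ^ (n - k + 1) / (((n - k : ℕ) : ℝ) + 1))
        = (1 / 2 : ℝ) ^ (n + 2) * (1 / (((k : ℝ) + 1) * ((n : ℝ) - (k : ℝ) + 1))) := by
      intro k hk
      simp only [Finset.mem_range] at hk
      have hexp : n + 2 = (k + 1) + (n - k + 1) := by omega
      rw [hexp, pow_add, Nat.cast_sub (by omega)]
      have h1 : ((k : ℝ) + 1) ≠ 0 := by positivity
      have h2 : (0 : ℝ) < (n : ℝ) - (k : ℝ) + 1 := by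
        have : (k : ℝ) ≤ (n : ℝ) := by exact_mod_cast Nat.lt_succ_iff.mp hk
        linarith
      field_simp
      ring
    rw [Finset.sum_congr rfl hterm, ← Finset.mul_sum, f1 n]
  rw [he] at h
  exact h

lemma esum : ∀ M : ℕ, ∑ k ∈ Finset.range M, H 1 (k + 1) / ((k : ℝ) + 2) = E2 (M + 1) := by
  intro M
  induction M with
  | zero =>
    rw [Finset.range_zero, Finset.sum_empty]
    exact E2_one.symm
  | succ M ih =>
    rw [Finset.sum_range_succ, ih]
    have h := E2_succ (M + 1)
    rw [h]
    push_cast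
    ring

lemma Wlem : ∀ n : ℕ, ∑ k ∈ Finset.range (n + 1), H 1 (n - k + 1) / ((k : ℝ) + 1)
    = 2 * E2 (n + 2) := by
  intro n
  induction n with
  | zero =>
    have h2 : E2 2 = 1 / 2 := by
      have ha := E2_succ 1
      have hb : H 1 1 = 1 := by rw [H_succ, H_zero]; norm_num
      rw [E2_one, hb] at ha
      rw [ha]; norm_num
    have hb : H 1 1 = 1 := by rw [H_succ, H_zero]; norm_num
    norm_num [Finset.sum_range_one, hb, h2]
  | succ n ih =>
    rw [Finset.sum_range_succ]
    have hlast : H 1 (n + 1 - (n + 1) + 1) / (((n + 1 : ℕ) : ℝ) + 1) = 1 / ((n : ℝ) + 2) := by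
      have : n + 1 - (n + 1) + 1 = 1 := by omega
      rw [this]
      have hb : H 1 1 = 1 := by rw [H_succ, H_zero]; norm_num
      rw [hb]
      push_cast
      ring
    rw [hlast]
    have hstep : ∀ k ∈ Finset.range (n + 1), H 1 (n + 1 - k + 1) / ((k : ℝ) + 1)
        = H 1 (n - k + 1) / ((k : ℝ) + 1)
          + 1 / (((k : ℝ) + 1) * ((n : ℝ) - (k : ℝ) + 2)) := by
      intro k hk
      simp only [Finset.mem_range] at hk
      have he : n + 1 - k + 1 = (n - k + 1) + 1 := by omega
      rw [he, H_succ]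
      have hc : (((n - k + 1 : ℕ) : ℝ) + 1) = (n : ℝ) - (k : ℝ) + 2 := by
        rw [Nat.cast_add, Nat.cast_sub (by omega)]
        push_cast
        ring
      rw [hc, pow_one]
      have h1 : ((k : ℝ) + 1) ≠ 0 := by positivity
      have h2 : (0 : ℝ) < (n : ℝ) - (k : ℝ) + 2 := by
        have : (k : ℝ) ≤ (n : ℝ) := by exact_mod_cast Nat.lt_succ_iff.mp hk
        linarith
      field_simp
    rw [Finset.sum_congr rfl hstep, Finset.sum_add_distrib, ih]
    -- now need: 2*E2(n+2) + Σ_{k∈range(n+1)} 1/((k+1)((n:ℝ)-k+2)) + 1/(n+2) = 2*E2(n+3)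
    have hf1 := f1 (n + 1)
    -- f1 (n+1) : Σ_{k∈range(n+2)} 1/((k+1)*((n+1:ℝ)-k+1)) = 2*H 1 (n+2)/((n:ℝ)+3)
    rw [Finset.sum_range_succ] at hf1
    have hlast2 : 1 / ((((n + 1 : ℕ) : ℝ) + 1) * (((n + 1 : ℕ) : ℝ) - ((n + 1 : ℕ) : ℝ) + 1))
        = 1 / ((n : ℝ) + 2) := by
      push_cast
      ring_nf
    rw [hlast2] at hf1
    have hmid : ∑ k ∈ Finset.range (n + 1), 1 / (((k : ℝ) + 1) * (((n + 1 : ℕ) : ℝ) - (k : ℝ) + 1))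
        = ∑ k ∈ Finset.range (n + 1), 1 / (((k : ℝ) + 1) * ((n : ℝ) - (k : ℝ) + 2)) := by
      refine Finset.sum_congr rfl fun k _ => ?_
      push_cast
      ring_nf
    rw [hmid] at hf1
    -- hf1 : Σ_{range(n+1)} 1/((k+1)((n:ℝ)-k+2)) + 1/((n:ℝ)+2) = 2*H 1 (n+2)/((n:ℝ)+3)
    have hE := E2_succ (n + 2)
    -- E2 (n+3) = E2 (n+2) + H 1 (n+2)/((n+2:ℝ)+1)
    rw [show n + 1 + 1 = n + 2 by omega] at hf1
    rw [show n + 1 + 2 = n + 2 + 1 by omega]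
    have hden : 2 * H 1 (n + 2) / (((n + 1 : ℕ) : ℝ) + 2)
        = 2 * (H 1 (n + 2) / (((n + 2 : ℕ) : ℝ) + 1)) := by
      push_cast; ring
    rw [hden] at hf1
    rw [hE]
    linarith [hf1]

lemma f2 (n : ℕ) : ∑ k ∈ Finset.range (n + 1),
    H 1 (n - k + 1) / (((k : ℝ) + 1) * ((n : ℝ) - (k : ℝ) + 2))
    = 3 * E2 (n + 2) / ((n : ℝ) + 3) := by
  have hsplit : ∀ k ∈ Finset.range (n + 1),
      H 1 (n - k + 1) / (((k : ℝ) + 1) * ((n : ℝ) - (k : ℝ) + 2))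
      = (1 / ((n : ℝ) + 3)) * (H 1 (n - k + 1) / ((k : ℝ) + 1)
          + H 1 (n - k + 1) / ((n : ℝ) - (k : ℝ) + 2)) := by
    intro k hk
    simp only [Finset.mem_range] at hk
    have h1 : ((k : ℝ) + 1) ≠ 0 := by positivity
    have h2 : (0 : ℝ) < (n : ℝ) - (k : ℝ) + 2 := by
      have : (k : ℝ) ≤ (n : ℝ) := by exact_mod_cast Nat.lt_succ_iff.mp hk
      linarith
    have h3 : ((n : ℝ) + 3) ≠ 0 := by positivity
    field_simp
    ring
  rw [Finset.sum_congr rfl hsplit, ← Finset.mul_sum, Finset.sum_add_distrib, Wlem n]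
  have hS2 : ∑ k ∈ Finset.range (n + 1), H 1 (n - k + 1) / ((n : ℝ) - (k : ℝ) + 2)
      = E2 (n + 2) := by
    have hcast : ∀ k ∈ Finset.range (n + 1),
        H 1 (n - k + 1) / ((n : ℝ) - (k : ℝ) + 2)
        = H 1 ((n - k) + 1) / (((n - k : ℕ) : ℝ) + 2) := by
      intro k hk
      simp only [Finset.mem_range] at hk
      rw [Nat.cast_sub (by omega)]
    rw [Finset.sum_congr rfl hcast]
    have hrefl := Finset.sum_range_reflect (fun k => H 1 (k + 1) / ((k : ℝ) + 2)) (n + 1)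
    simp only [Nat.add_sub_cancel] at hrefl
    rw [hrefl, esum (n + 1)]
  rw [hS2]
  ring

lemma hL2_norm : Summable fun n : ℕ =>
    ‖(1 / 2 : ℝ) ^ (n + 2) * (2 * H 1 (n + 1) / ((n : ℝ) + 2))‖ := by
  refine hL2.summable.congr fun n => ?_
  rw [Real.norm_eq_abs, abs_of_nonneg ?_]
  have := H_nonneg 1 (n + 1)
  positivity

lemma hL3 : HasSum (fun n : ℕ => (1 / 2 : ℝ) ^ (n + 3) * (6 * E2 (n + 2) / ((n : ℝ) + 3)))
    ((Real.log 2) ^ 3) := by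
  have h := hasSum_sum_range_mul_of_summable_norm hlog_norm hL2_norm
  rw [hlog.tsum_eq, hL2.tsum_eq] at h
  have he : (fun n : ℕ => ∑ k ∈ Finset.range (n + 1),
      (1 / 2 : ℝ) ^ (k + 1) / ((k : ℝ) + 1)
        * ((1 / 2 : ℝ) ^ ((n - k) + 2) * (2 * H 1 ((n - k) + 1) / (((n - k : ℕ) : ℝ) + 2))))
      = fun n : ℕ => (1 / 2 : ℝ) ^ (n + 3) * (6 * E2 (n + 2) / ((n : ℝ) + 3)) := by
    funext n
    have hterm : ∀ k ∈ Finset.range (n + 1),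
        (1 / 2 : ℝ) ^ (k + 1) / ((k : ℝ) + 1)
          * ((1 / 2 : ℝ) ^ ((n - k) + 2) * (2 * H 1 ((n - k) + 1) / (((n - k : ℕ) : ℝ) + 2)))
        = (1 / 2 : ℝ) ^ (n + 3)
          * (2 * (H 1 (n - k + 1) / (((k : ℝ) + 1) * ((n : ℝ) - (k : ℝ) + 2)))) := by
      intro k hk
      simp only [Finset.mem_range] at hk
      have hexp : n + 3 = (k + 1) + ((n - k) + 2) := by omega
      rw [hexp, pow_add, Nat.cast_sub (by omega)]
      have h1 : ((k : ℝ) + 1) ≠ 0 := by positivity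
      have h2 : (0 : ℝ) < (n : ℝ) - (k : ℝ) + 2 := by
        have : (k : ℝ) ≤ (n : ℝ) := by exact_mod_cast Nat.lt_succ_iff.mp hk
        linarith
      field_simp
      ring_nf
    rw [Finset.sum_congr rfl hterm, ← Finset.mul_sum, ← Finset.mul_sum, f2 n]
    ring
  rw [he] at h
  convert h using 1
  · rfl
  ring

lemma eulerII : HasSum (fun m : ℕ => E2 m / (((m : ℝ) + 1) * 2 ^ (m + 1)))
    ((Real.log 2) ^ 3 / 6) := by
  set f : ℕ → ℝ := fun m => E2 m / (((m : ℝ) + 1) * 2 ^ (m + 1)) with hfdef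
  have h6 := hL3.div_const 6
  have he : (fun n : ℕ => (1 / 2 : ℝ) ^ (n + 3) * (6 * E2 (n + 2) / ((n : ℝ) + 3)) / 6)
      = fun n : ℕ => f (n + 2) := by
    funext n
    simp only [hfdef]
    push_cast
    have h1 : ((n : ℝ) + 3) ≠ 0 := by positivity
    have h2 : (2 : ℝ) ^ (n + 3) ≠ 0 := by positivity
    rw [show (n : ℝ) + 2 + 1 = (n : ℝ) + 3 by ring, show n + 2 + 1 = n + 3 by omega]
    rw [div_pow, one_pow]
    field_simp
  rw [he] at h6
  have h7 := (hasSum_nat_add_iff (f := f) 2).mp h6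
  have hz : ∑ i ∈ Finset.range 2, f i = 0 := by
    rw [Finset.sum_range_succ, Finset.sum_range_one]
    simp only [hfdef]
    rw [E2_zero, E2_one]
    norm_num
  rw [hz, add_zero] at h7
  exact h7

lemma P3_zero : P3 0 = 0 := by simp [P3, H_zero]

lemma psum1 : ∀ n : ℕ, ∑ m ∈ Finset.range (n + 1), G2 (m + 1) / ((m : ℝ) + 1) = P3 (n + 1) := by
  intro n
  induction n with
  | zero =>
    rw [Finset.sum_range_one, P3_succ 0, P3_zero]
    norm_num
  | succ n ih =>
    rw [Finset.sum_range_succ, ih]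
    exact (P3_succ (n + 1)).symm

lemma psum2 : ∀ n : ℕ, ∑ m ∈ Finset.range (n + 1), E2 m / ((m : ℝ) + 1)
    = P3 (n + 1) - H 1 (n + 1) * H 2 (n + 1) := by
  intro n
  induction n with
  | zero =>
    rw [Finset.sum_range_one, E3_succ 0, P3_zero, E2_zero, H_zero]
    simp
  | succ n ih =>
    rw [Finset.sum_range_succ, ih]
    exact (E3_succ (n + 1)).symm

theorem stmt_19 (z3 : ℝ) (hz3 : HasSum (fun n : ℕ => 1 / ((n : ℝ) + 1) ^ 3) z3) :
    HasSum (fun j : ℕ =>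
        ((H 1 (j + 1)) ^ 3 + 3 * H 1 (j + 1) * H 2 (j + 1) + 2 * H 3 (j + 1))
          / (12 * 2 ^ (j + 1))) (3 / 4 * z3) ∧
    HasSum (fun j : ℕ => H 1 (j + 1) * H 2 (j + 1) / 2 ^ (j + 2))
      (3 / 4 * z3 - (Real.log 2) ^ 3 / 6) := by
  -- series (I)
  have hG : HasSum (fun m : ℕ => G2 (m + 1) / ((m : ℝ) + 1) / 2 ^ (m + 1)) (3 / 4 * z3) := by
    have h := eulerI hz3
    have he : (fun m : ℕ => G2 (m + 1) / (((m : ℝ) + 1) * 2 ^ (m + 1)))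
        = fun m : ℕ => G2 (m + 1) / ((m : ℝ) + 1) / 2 ^ (m + 1) := by
      funext m; rw [div_div]
    rwa [he] at h
  have hGnn : ∀ m : ℕ, 0 ≤ G2 (m + 1) / ((m : ℝ) + 1) := by
    intro m
    have := G2_nonneg (m + 1)
    positivity
  have h1 := abel _ hGnn hG
  have he1 : (fun n : ℕ => (∑ m ∈ Finset.range (n + 1), G2 (m + 1) / ((m : ℝ) + 1)) / 2 ^ (n + 2))
      = fun n : ℕ => P3 (n + 1) / 2 ^ (n + 2) := by
    funext n; rw [psum1 n]
  rw [he1] at h1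
  -- h1 : HasSum (fun n => P3 (n+1) / 2^(n+2)) (3/4 * z3)
  have target1 : (fun n : ℕ => P3 (n + 1) / 2 ^ (n + 2))
      = fun j : ℕ =>
        ((H 1 (j + 1)) ^ 3 + 3 * H 1 (j + 1) * H 2 (j + 1) + 2 * H 3 (j + 1))
          / (12 * 2 ^ (j + 1)) := by
    funext j
    rw [P3, pow_succ]
    have h2 : (2 : ℝ) ^ (j + 1) ≠ 0 := by positivity
    field_simp
    ring_nf
  constructor
  · rw [target1] at h1
    exact h1
  -- series (II)
  · have hE : HasSum (fun m : ℕ => E2 m / ((m : ℝ) + 1) / 2 ^ (m + 1))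
        ((Real.log 2) ^ 3 / 6) := by
      have h := eulerII
      have he : (fun m : ℕ => E2 m / (((m : ℝ) + 1) * 2 ^ (m + 1)))
          = fun m : ℕ => E2 m / ((m : ℝ) + 1) / 2 ^ (m + 1) := by
        funext m; rw [div_div]
      rwa [he] at h
    have hEnn : ∀ m : ℕ, 0 ≤ E2 m / ((m : ℝ) + 1) := by
      intro m
      have := E2_nonneg m
      positivity
    have h2 := abel _ hEnn hE
    have he2 : (fun n : ℕ => (∑ m ∈ Finset.range (n + 1), E2 m / ((m : ℝ) + 1)) / 2 ^ (n + 2))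
        = fun n : ℕ => (P3 (n + 1) - H 1 (n + 1) * H 2 (n + 1)) / 2 ^ (n + 2) := by
      funext n; rw [psum2 n]
    rw [he2] at h2
    have hsub := h1.sub h2
    have he3 : (fun n : ℕ => P3 (n + 1) / 2 ^ (n + 2)
        - (P3 (n + 1) - H 1 (n + 1) * H 2 (n + 1)) / 2 ^ (n + 2))
        = fun j : ℕ => H 1 (j + 1) * H 2 (j + 1) / 2 ^ (j + 2) := by
      funext n
      rw [div_sub_div_same, sub_sub_cancel]
    rwa [he3] at hsub
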